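/- Let m ≥ 3, let p be a symmetric K×K real matrix, fix a ∈ {1,…,K}, and let q_2,…,q_m : {1,…,K} → ℝ satisfy Σ_{t=1}^K q_j(t) = 1 for each j. For 2 ≤ n ≤ m define E_n(a) = Σ_{(t_2,…,t_n)∈{1,…,K}^{n−1}} ( Σ_{1≤r<s≤n} p_{t_r t_s} ) · ∏_{j=2}^{n} q_j(t_j), where t_1 = a, and define s_n(b) = Σ_{k=2}^{n−1} Σ_{t=1}^K p_{t b}·q_k(t). Then for every 3 ≤ n ≤ m the recursion E_n(a) = E_{n−1}(a) + Σ_{t=1}^K q_n(t)·( p_{a t} + s_n(t) ) holds, so that E_m(a) (the unnormalized hyperedge-to-node message) can be computed in O(K·m) operations. -/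

import Mathlib

open Finset

lemma marg {ι : Type*} [Fintype ι] [DecidableEq ι] {K : ℕ} (q : ι → Fin K → ℝ)
    (hq : ∀ i, ∑ v, q i v = 1) :
    ∑ t : ι → Fin K, ∏ i, q i (t i) = 1 := by
  rw [← Fintype.prod_sum]
  simp [hq]

lemma lin {ι : Type*} [Fintype ι] [DecidableEq ι] {K : ℕ} (q f : ι → Fin K → ℝ)
    (hq : ∀ i, ∑ v, q i v = 1) :
    ∑ t : ι → Fin K, (∑ i, f i (t i)) * ∏ i, q i (t i) = ∑ i, ∑ v, f i v * q i v := by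
  simp_rw [Finset.sum_mul]
  rw [Finset.sum_comm]
  refine Finset.sum_congr rfl fun i _ => ?_
  rw [← Equiv.sum_comp (Equiv.funSplitAt i (Fin K)).symm, Fintype.sum_prod_type]
  refine Finset.sum_congr rfl fun v _ => ?_
  have key : ∀ s : {j // j ≠ i} → Fin K,
      (∏ j, q j ((Equiv.funSplitAt i (Fin K)).symm (v, s) j))
        = q i v * ∏ j : {j // j ≠ i}, q j (s j) := by
    intro s
    rw [Fintype.prod_eq_mul_prod_compl i]
    simp only [Equiv.funSplitAt, Equiv.piSplitAt, Equiv.coe_fn_symm_mk, dif_pos rfl]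
    congr 1
    rw [Finset.prod_subtype ({i}ᶜ) (p := fun j => j ≠ i) (fun j => by simp)]
    refine Finset.prod_congr rfl fun j _ => ?_
    rw [dif_neg j.2]
  have hv : ∀ s : {j // j ≠ i} → Fin K,
      (Equiv.funSplitAt i (Fin K)).symm (v, s) i = v := by
    intro s
    simp [Equiv.funSplitAt, Equiv.piSplitAt]
  calc (∑ s : {j // j ≠ i} → Fin K,
        f i ((Equiv.funSplitAt i (Fin K)).symm (v, s) i) *
          ∏ j, q j ((Equiv.funSplitAt i (Fin K)).symm (v, s) j))
      = ∑ s : {j // j ≠ i} → Fin K, f i v * (q i v * ∏ j : {j // j ≠ i}, q j (s j)) := by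
        refine Finset.sum_congr rfl fun s _ => ?_
        rw [key, hv]
    _ = f i v * q i v := by
        rw [← Finset.mul_sum, ← Finset.mul_sum,
          marg (fun j : {j // j ≠ i} => q j) (fun j => hq j), mul_one]

/-- Dynamic-programming recursion for the (unnormalized) hyperedge-to-node
message on the hyperedge `{1,…,m}` with node `1` pinned to community `a`: with
`E_n(a) = Σ_{(t_2,…,t_n)} (Σ_{1≤r<s≤n} p_{t_r t_s}) ∏_{j=2}^n q_j(t_j)` (`t_1 = a`) and
`s_n(b) = Σ_{k=2}^{n−1} Σ_t p_{t b} q_k(t)`, for every `3 ≤ n ≤ m` one has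
`E_n(a) = E_{n−1}(a) + Σ_t q_n(t)·(p_{a t} + s_n(t))`, so `E_m(a)` is computable in `O(K·m)`
operations. -/
theorem message_dynamic_programming_recursion {K : ℕ} (hK : 1 ≤ K) (m : ℕ) (hm : 3 ≤ m)
    (p : Fin K → Fin K → ℝ) (hp : ∀ a b, p a b = p b a) (a : Fin K)
    (q : ℕ → Fin K → ℝ) (hq : ∀ j, 2 ≤ j → j ≤ m → ∑ u, q j u = 1) :
    ∀ n, 3 ≤ n → n ≤ m →
      (∑ t : {x // x ∈ Finset.Icc 2 n} → Fin K,
          (∑ rs ∈ ((Finset.Icc 1 n) ×ˢ (Finset.Icc 1 n)).filter fun rs => rs.1 < rs.2,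
              p (if h : rs.1 ∈ Finset.Icc 2 n then t ⟨rs.1, h⟩ else a)
                (if h : rs.2 ∈ Finset.Icc 2 n then t ⟨rs.2, h⟩ else a))
            * ∏ j : {x // x ∈ Finset.Icc 2 n}, q j.1 (t j))
      = (∑ t : {x // x ∈ Finset.Icc 2 (n - 1)} → Fin K,
          (∑ rs ∈ ((Finset.Icc 1 (n - 1)) ×ˢ (Finset.Icc 1 (n - 1))).filter
              fun rs => rs.1 < rs.2,
              p (if h : rs.1 ∈ Finset.Icc 2 (n - 1) then t ⟨rs.1, h⟩ else a)
                (if h : rs.2 ∈ Finset.Icc 2 (n - 1) then t ⟨rs.2, h⟩ else a))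
            * ∏ j : {x // x ∈ Finset.Icc 2 (n - 1)}, q j.1 (t j))
        + ∑ u, q n u * (p a u + ∑ k ∈ Finset.Icc 2 (n - 1), ∑ v, p v u * q k v) := by
  intro n hn3 hnm
  have h2n : 2 ≤ n := by omega
  have hsub : ∀ x, x ∈ Finset.Icc 2 (n-1) → x ∈ Finset.Icc 2 n := by
    intro x hx; simp only [Finset.mem_Icc] at *; omega
  have hmemn : n ∈ Finset.Icc 2 n := by simp only [Finset.mem_Icc]; omega
  have hnot : n ∉ Finset.Icc 2 (n-1) := by simp only [Finset.mem_Icc]; omega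
  have hlast : ∀ x, x ∈ Finset.Icc 2 n → x ∉ Finset.Icc 2 (n-1) → x = n := by
    intro x; simp only [Finset.mem_Icc, not_and, not_le]; omega
  -- abbreviations
  set ι := {x // x ∈ Finset.Icc 2 (n-1)} with hι
  have hqsub : ∀ i : ι, ∑ v, q i.1 v = 1 := by
    intro i
    have := i.2
    simp only [Finset.mem_Icc] at this
    exact hq i.1 this.1 (by omega)
  have hqn : ∑ u, q n u = 1 := hq n h2n hnm
  -- the splitting equivalence
  let e : (ι → Fin K) × Fin K ≃ ({x // x ∈ Finset.Icc 2 n} → Fin K) :=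
  { toFun := fun tu x => if h : x.1 ∈ Finset.Icc 2 (n-1) then tu.1 ⟨x.1, h⟩ else tu.2
    invFun := fun t => (fun j => t ⟨j.1, hsub _ j.2⟩, t ⟨n, hmemn⟩)
    left_inv := by
      rintro ⟨t, u⟩
      refine Prod.ext (funext fun j => ?_) ?_
      · exact dif_pos j.2
      · exact dif_neg hnot
    right_inv := by
      intro t
      funext x
      dsimp only
      split_ifs with h
      · rfl
      · exact (congrArg t (Subtype.ext (hlast x.1 x.2 h))).symm }
  rw [← Equiv.sum_comp e, Fintype.sum_prod_type]
  -- notation for the pieces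
  set A : (ι → Fin K) → ℝ := fun t =>
    ∑ rs ∈ ((Finset.Icc 1 (n-1)) ×ˢ (Finset.Icc 1 (n-1))).filter fun rs => rs.1 < rs.2,
      p (if h : rs.1 ∈ Finset.Icc 2 (n-1) then t ⟨rs.1, h⟩ else a)
        (if h : rs.2 ∈ Finset.Icc 2 (n-1) then t ⟨rs.2, h⟩ else a) with hA
  set Pr : (ι → Fin K) → ℝ := fun t => ∏ j : ι, q j.1 (t j) with hPr
  -- main pointwise computation
  have step : ∀ (t : ι → Fin K) (u : Fin K),
      ((∑ rs ∈ ((Finset.Icc 1 n) ×ˢ (Finset.Icc 1 n)).filter fun rs => rs.1 < rs.2,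
          p (if h : rs.1 ∈ Finset.Icc 2 n then (e (t, u)) ⟨rs.1, h⟩ else a)
            (if h : rs.2 ∈ Finset.Icc 2 n then (e (t, u)) ⟨rs.2, h⟩ else a))
        * ∏ j : {x // x ∈ Finset.Icc 2 n}, q j.1 ((e (t, u)) j))
      = (A t + (p a u + (∑ i : ι, p (t i) u))) * (Pr t * q n u) := by
    intro t u
    -- the total assignment
    set w : ℕ → Fin K := fun x =>
      if x = n then u else if h : x ∈ Finset.Icc 2 (n-1) then t ⟨x, h⟩ else a with hw
    have hval : ∀ x, (if h : x ∈ Finset.Icc 2 n then (e (t, u)) ⟨x, h⟩ else a) = w x := by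
      intro x
      by_cases hx : x ∈ Finset.Icc 2 n
      · rw [dif_pos hx]
        show (if h : x ∈ Finset.Icc 2 (n-1) then t ⟨x, h⟩ else u) = w x
        by_cases hx1 : x ∈ Finset.Icc 2 (n-1)
        · have hxn : x ≠ n := fun hxeq => hnot (hxeq ▸ hx1)
          rw [dif_pos hx1, hw]
          simp only [if_neg hxn, dif_pos hx1]
        · have hxn : x = n := hlast x hx hx1
          rw [dif_neg hx1, hw]
          simp only [if_pos hxn]
      · have hxn : x ≠ n := fun hxeq => hx (hxeq ▸ hmemn)
        have hx1 : x ∉ Finset.Icc 2 (n-1) := fun h => hx (hsub x h)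
        rw [dif_neg hx, hw]
        simp only [if_neg hxn, dif_neg hx1]
    -- split of the index set for the pair sum
    have hS : ((Finset.Icc 1 n) ×ˢ (Finset.Icc 1 n)).filter (fun rs => rs.1 < rs.2)
        = ((Finset.Icc 1 (n-1)) ×ˢ (Finset.Icc 1 (n-1))).filter (fun rs => rs.1 < rs.2)
          ∪ (Finset.Icc 1 (n-1)).map ⟨fun r => (r, n), fun x y h => (Prod.mk.injEq _ _ _ _ ▸ h).1⟩ := by
      ext ⟨r, s⟩
      simp only [Finset.mem_filter, Finset.mem_product, Finset.mem_union, Finset.mem_map,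
        Finset.mem_Icc, Function.Embedding.coeFn_mk, Prod.mk.injEq]
      dsimp only [DFunLike.coe]
      simp only [Prod.mk.injEq]
      constructor
      · rintro ⟨⟨⟨h1, h2⟩, h3, h4⟩, h5⟩
        by_cases hs : s = n
        · exact Or.inr ⟨r, ⟨h1, by omega⟩, rfl, hs.symm⟩
        · exact Or.inl ⟨⟨⟨h1, by omega⟩, by omega, by omega⟩, h5⟩
      · rintro (⟨⟨⟨h1, h2⟩, h3, h4⟩, h5⟩ | ⟨r', ⟨h1, h2⟩, h3, h4⟩)
        · exact ⟨⟨⟨h1, by omega⟩, by omega, by omega⟩, h5⟩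
        · subst h3; subst h4; exact ⟨⟨⟨by omega, by omega⟩, by omega, le_refl n⟩, by omega⟩
    have hdisj : Disjoint
        (((Finset.Icc 1 (n-1)) ×ˢ (Finset.Icc 1 (n-1))).filter (fun rs => rs.1 < rs.2))
        ((Finset.Icc 1 (n-1)).map ⟨fun r => (r, n), fun x y h => (Prod.mk.injEq _ _ _ _ ▸ h).1⟩) := by
      rw [Finset.disjoint_left]
      rintro ⟨r, s⟩ h1 h2
      simp only [Finset.mem_filter, Finset.mem_product, Finset.mem_Icc] at h1
      simp only [Finset.mem_map, Finset.mem_Icc, Function.Embedding.coeFn_mk, Prod.mk.injEq] at h2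
      obtain ⟨r', hr', hr1, hr2⟩ := h2
      omega
    have hIcc1 : Finset.Icc 1 (n-1) = insert 1 (Finset.Icc 2 (n-1)) := by
      ext x; simp only [Finset.mem_Icc, Finset.mem_insert]; omega
    have h1not : (1 : ℕ) ∉ Finset.Icc 2 (n-1) := by simp only [Finset.mem_Icc]; omega
    have hwn : w n = u := by rw [hw]; simp
    have hw1 : w 1 = a := by
      rw [hw]
      have : (1:ℕ) ≠ n := by omega
      simp only [if_neg this, dif_neg h1not]
    -- compute the pair sum
    have pairsum : (∑ rs ∈ ((Finset.Icc 1 n) ×ˢ (Finset.Icc 1 n)).filter fun rs => rs.1 < rs.2,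
          p (if h : rs.1 ∈ Finset.Icc 2 n then (e (t, u)) ⟨rs.1, h⟩ else a)
            (if h : rs.2 ∈ Finset.Icc 2 n then (e (t, u)) ⟨rs.2, h⟩ else a))
        = A t + (p a u + (∑ i : ι, p (t i) u)) := by
      simp only [hval]
      rw [hS, Finset.sum_union hdisj, Finset.sum_map]
      congr 1
      · -- pairs within [1, n-1]
        rw [hA]
        refine Finset.sum_congr rfl fun rs hrs => ?_
        simp only [Finset.mem_filter, Finset.mem_product, Finset.mem_Icc] at hrs
        have hr : w rs.1 = if h : rs.1 ∈ Finset.Icc 2 (n-1) then t ⟨rs.1, h⟩ else a := by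
          rw [hw]; have : rs.1 ≠ n := by omega
          simp only [if_neg this]
        have hs' : w rs.2 = if h : rs.2 ∈ Finset.Icc 2 (n-1) then t ⟨rs.2, h⟩ else a := by
          rw [hw]; have : rs.2 ≠ n := by omega
          simp only [if_neg this]
        rw [hr, hs']
      · -- pairs (r, n)
        dsimp only [DFunLike.coe]
        simp only [Function.Embedding.coeFn_mk, hwn]
        rw [hIcc1, Finset.sum_insert h1not, hw1]
        congr 1
        rw [← Finset.sum_coe_sort (Finset.Icc 2 (n-1)) (fun r => p (w r) u)]
        refine Finset.sum_congr rfl fun r _ => ?_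
        congr 1
        rw [hw]
        have : r.1 ≠ n := by
          have := r.2
          simp only [Finset.mem_Icc] at this
          omega
        simp only [if_neg this, dif_pos r.2]
    -- compute the product
    have prodeq : (∏ j : {x // x ∈ Finset.Icc 2 n}, q j.1 ((e (t, u)) j))
        = Pr t * q n u := by
      have hins : Finset.Icc 2 n = insert n (Finset.Icc 2 (n-1)) := by
        ext x; simp only [Finset.mem_Icc, Finset.mem_insert]; omega
      have : (∏ j : {x // x ∈ Finset.Icc 2 n}, q j.1 ((e (t, u)) j))
          = ∏ x ∈ Finset.Icc 2 n, q x
              (if h : x ∈ Finset.Icc 2 (n-1) then t ⟨x, h⟩ else u) := by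
        rw [← Finset.prod_coe_sort (Finset.Icc 2 n)
          (fun x => q x (if h : x ∈ Finset.Icc 2 (n-1) then t ⟨x, h⟩ else u))]
        rfl
      rw [this, hins, Finset.prod_insert hnot, dif_neg hnot, hPr, mul_comm]
      congr 1
      rw [← Finset.prod_coe_sort (Finset.Icc 2 (n-1))
        (fun x => q x (if h : x ∈ Finset.Icc 2 (n-1) then t ⟨x, h⟩ else u))]
      exact Finset.prod_congr rfl fun j _ => by rw [dif_pos j.2]
    rw [pairsum, prodeq]
  simp only [step]
  -- now pure algebra with the marginalization lemmas
  have expand : ∀ (t : ι → Fin K) (u : Fin K),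
      (A t + (p a u + (∑ i : ι, p (t i) u))) * (Pr t * q n u)
        = A t * Pr t * q n u + (p a u * q n u) * Pr t
            + q n u * ((∑ i : ι, p (t i) u) * Pr t) := by
    intro t u; ring
  simp only [expand]
  simp only [Finset.sum_add_distrib]
  have e1 : (∑ t : ι → Fin K, ∑ u, A t * Pr t * q n u) = ∑ t : ι → Fin K, A t * Pr t := by
    refine Finset.sum_congr rfl fun t _ => ?_
    rw [← Finset.mul_sum, hqn, mul_one]
  have e2 : (∑ t : ι → Fin K, ∑ u, (p a u * q n u) * Pr t)
      = ∑ u, q n u * p a u := by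
    rw [Finset.sum_comm]
    have : ∀ u, (∑ t : ι → Fin K, (p a u * q n u) * Pr t) = q n u * p a u := by
      intro u
      rw [← Finset.mul_sum, marg (fun i : ι => q i.1) hqsub, mul_one, mul_comm]
    simp only [this]
  have e3 : (∑ t : ι → Fin K, ∑ u, q n u * ((∑ i : ι, p (t i) u) * Pr t))
      = ∑ u, q n u * (∑ k ∈ Finset.Icc 2 (n-1), ∑ v, p v u * q k v) := by
    rw [Finset.sum_comm]
    refine Finset.sum_congr rfl fun u _ => ?_
    rw [← Finset.mul_sum]
    congr 1
    rw [lin (fun i : ι => q i.1) (fun _ v => p v u) hqsub]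
    rw [← Finset.sum_coe_sort (Finset.Icc 2 (n-1)) (fun k => ∑ v, p v u * q k v)]
  rw [e1, e2, e3]
  have : (∑ u, q n u * (p a u + ∑ k ∈ Finset.Icc 2 (n-1), ∑ v, p v u * q k v))
      = ∑ u, (q n u * p a u + q n u * (∑ k ∈ Finset.Icc 2 (n-1), ∑ v, p v u * q k v)) := by
    refine Finset.sum_congr rfl fun u _ => ?_; ring
  rw [this, Finset.sum_add_distrib]
  ring
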